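/- arXiv:2010.04720 — 2 statements merged into one kernel-verified Lean document; each statement's English description precedes it below -/
import Mathlib

section
/- Let n ≥ 1, let K ⊂ ℝⁿ be a non-empty closed set and let λ > 0. Then for every x ∈ ℝⁿ, C^u_λ(χ_K)(x) = C^u_λ(D²_λ(·, K))(x), i.e. the upper compensated convex transform of the characteristic function of K coincides with the upper compensated convex transform of the distance-based function D²_λ(·, K). -/
/-- Convex envelope: pointwise sup of affine minorants. -/
noncomputable def convEnv {n : ℕ} (g : EuclideanSpace ℝ (Fin n) → ℝ)
    (x : EuclideanSpace ℝ (Fin n)) : ℝ :=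
  sSup {a : ℝ | ∃ ℓ : EuclideanSpace ℝ (Fin n) →ᵃ[ℝ] ℝ, (∀ y, ℓ y ≤ g y) ∧ a = ℓ x}

/-- Upper compensated convex transform. -/
noncomputable def upperT {n : ℕ} (lam : ℝ) (f : EuclideanSpace ℝ (Fin n) → ℝ)
    (x : EuclideanSpace ℝ (Fin n)) : ℝ :=
  lam * ‖x‖ ^ 2 - convEnv (fun y => lam * ‖y‖ ^ 2 - f y) x

/-- Characteristic function of a set: `χ_K(x) = 1` if `x ∈ K`, `0` otherwise. -/
noncomputable def chi {n : ℕ} (K : Set (EuclideanSpace ℝ (Fin n)))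
    (x : EuclideanSpace ℝ (Fin n)) : ℝ :=
  K.indicator (fun _ => (1 : ℝ)) x

/-- The distance-based function `D²_λ(x, K) = (max{0, 1 − √λ·dist(x,K)})²`. -/
noncomputable def distSq {n : ℕ} (lam : ℝ) (K : Set (EuclideanSpace ℝ (Fin n)))
    (x : EuclideanSpace ℝ (Fin n)) : ℝ :=
  (max 0 (1 - Real.sqrt lam * Metric.infDist x K)) ^ 2

open Metric in
lemma lineMap_norm_sq {E : Type*} [NormedAddCommGroup E] [InnerProductSpace ℝ E]
    (z w : E) (t : ℝ) :
    ‖(AffineMap.lineMap z w : ℝ →ᵃ[ℝ] E) t‖ ^ 2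
      = (1 - t) * ‖z‖ ^ 2 + t * ‖w‖ ^ 2 - t * (1 - t) * ‖w - z‖ ^ 2 := by
  have h1 : (AffineMap.lineMap z w : ℝ →ᵃ[ℝ] E) t = z + t • (w - z) := by
    simp [AffineMap.lineMap_apply]; abel
  have h2 : w = z + (w - z) := by abel
  rw [h1, norm_add_sq_real, norm_smul]
  nth_rewrite 3 [h2]
  rw [norm_add_sq_real, real_inner_smul_right]
  rw [mul_pow, Real.norm_eq_abs, sq_abs]
  ring

lemma chi_le_distSq {n : ℕ} (K : Set (EuclideanSpace ℝ (Fin n))) (lam : ℝ)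
    (y : EuclideanSpace ℝ (Fin n)) : chi K y ≤ distSq lam K y := by
  unfold chi distSq
  by_cases hy : y ∈ K
  · rw [Set.indicator_of_mem hy, Metric.infDist_zero_of_mem hy]
    norm_num
  · rw [Set.indicator_of_notMem hy]
    positivity

lemma minorant_iff {n : ℕ} (K : Set (EuclideanSpace ℝ (Fin n))) (hK : K.Nonempty)
    (hKc : IsClosed K) (lam : ℝ) (hlam : 0 < lam)
    (ℓ : EuclideanSpace ℝ (Fin n) →ᵃ[ℝ] ℝ) :
    (∀ y, ℓ y ≤ lam * ‖y‖ ^ 2 - chi K y) ↔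
      (∀ y, ℓ y ≤ lam * ‖y‖ ^ 2 - distSq lam K y) := by
  constructor
  · intro h y
    set d := Metric.infDist y K with hd
    have hd0 : 0 ≤ d := Metric.infDist_nonneg
    have hchi0 : ∀ v, (0:ℝ) ≤ chi K v := by
      intro v; unfold chi; exact Set.indicator_nonneg (fun _ _ => zero_le_one) v
    by_cases h1 : 1 ≤ Real.sqrt lam * d
    · have : distSq lam K y = 0 := by
        unfold distSq
        rw [max_eq_left (by linarith)]
        norm_num
      rw [this, sub_zero]
      have := h y
      have := hchi0 y
      linarith
    push_neg at h1
    by_cases hdz : d = 0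
    · have hyK : y ∈ K := by
        rw [hKc.mem_iff_infDist_zero hK]; exact hdz
      have h2 : distSq lam K y = 1 := by
        unfold distSq; rw [← hd, hdz]; norm_num
      have h3 : chi K y = 1 := by unfold chi; rw [Set.indicator_of_mem hyK]
      have := h y
      rw [h3] at this; rw [h2]; exact this
    · have hdpos : 0 < d := lt_of_le_of_ne hd0 (Ne.symm hdz)
      obtain ⟨z, hzK, hdz'⟩ := hKc.exists_infDist_eq_dist hK y
      set t := Real.sqrt lam * d with ht
      have hsl : 0 < Real.sqrt lam := Real.sqrt_pos.mpr hlam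
      have htpos : 0 < t := mul_pos hsl hdpos
      set w : EuclideanSpace ℝ (Fin n) := z + (1/t) • (y - z) with hw
      have hy : y = (AffineMap.lineMap z w : ℝ →ᵃ[ℝ] _) t := by
        rw [hw]
        simp only [AffineMap.lineMap_apply, vsub_eq_sub, vadd_eq_add]
        rw [add_sub_cancel_left, smul_smul, mul_one_div, div_self htpos.ne']
        simp
      have hwz : ‖w - z‖ ^ 2 = 1 / lam := by
        have : w - z = (1/t) • (y - z) := by rw [hw]; abel
        rw [this, norm_smul, mul_pow, Real.norm_eq_abs, sq_abs]
        have hyz : ‖y - z‖ = d := by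
          rw [hd, hdz', dist_eq_norm]
        rw [hyz, ht]
        rw [div_pow, mul_pow, one_pow, Real.sq_sqrt hlam.le]
        field_simp
      -- affine bound
      have hz' : ℓ z ≤ lam * ‖z‖ ^ 2 - 1 := by
        have := h z
        have h3 : chi K z = 1 := by unfold chi; rw [Set.indicator_of_mem hzK]
        rw [h3] at this; exact this
      have hw' : ℓ w ≤ lam * ‖w‖ ^ 2 := by
        have := h w
        have := hchi0 w
        linarith
      have hline : ℓ y = (1 - t) * ℓ z + t * ℓ w := by
        rw [hy, AffineMap.apply_lineMap]
        simp [AffineMap.lineMap_apply]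
        ring
      have hnorm : lam * ‖y‖ ^ 2
          = lam * ((1 - t) * ‖z‖ ^ 2 + t * ‖w‖ ^ 2) - t * (1 - t) := by
        rw [hy, lineMap_norm_sq, hwz]
        field_simp
      have ht1 : t < 1 := h1
      have hD : distSq lam K y = (1 - t) ^ 2 := by
        unfold distSq
        rw [← hd, ← ht, max_eq_right (by linarith)]
      rw [hD, hline]
      nlinarith [mul_le_mul_of_nonneg_left hz' (by linarith : (0:ℝ) ≤ 1 - t),
        mul_le_mul_of_nonneg_left hw' htpos.le]
  · intro h y
    have := h y
    have := chi_le_distSq K lam y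
    linarith

/-- The upper transform of `χ_K` coincides with the upper transform of `D²_λ(·, K)`. -/
theorem upperT_chi_eq_upperT_distSq (n : ℕ) (hn : 1 ≤ n)
    (K : Set (EuclideanSpace ℝ (Fin n))) (hK : K.Nonempty) (hKc : IsClosed K)
    (lam : ℝ) (hlam : 0 < lam) (x : EuclideanSpace ℝ (Fin n)) :
    upperT lam (chi K) x = upperT lam (distSq lam K) x := by
  unfold upperT convEnv
  congr 2
  ext a
  simp only [Set.mem_setOf_eq]
  constructor
  · rintro ⟨ℓ, hℓ, rfl⟩
    exact ⟨ℓ, (minorant_iff K hK hKc lam hlam ℓ).mp hℓ, rfl⟩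
  · rintro ⟨ℓ, hℓ, rfl⟩
    exact ⟨ℓ, (minorant_iff K hK hKc lam hlam ℓ).mpr hℓ, rfl⟩
end

section
/- Let n ≥ 1, let E, F ⊂ ℝⁿ be non-empty compact sets and let λ > 0. Then for all x ∈ ℝⁿ, |C^u_λ(χ_E)(x) − C^u_λ(χ_F)(x)| ≤ 2√λ · dist_H(E, F), i.e. the upper compensated convex transform of characteristic functions of compact sets is Hausdorff-Lipschitz continuous with constant 2√λ. -/
open scoped RealInnerProductSpace

lemma chi_nonneg {n : ℕ} (K : Set (EuclideanSpace ℝ (Fin n)))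
    (x : EuclideanSpace ℝ (Fin n)) : 0 ≤ chi K x := by
  unfold chi
  exact Set.indicator_nonneg (fun _ _ => zero_le_one) x

lemma chi_le_one {n : ℕ} (K : Set (EuclideanSpace ℝ (Fin n)))
    (x : EuclideanSpace ℝ (Fin n)) : chi K x ≤ 1 := by
  unfold chi
  by_cases hx : x ∈ K <;> simp [hx]

lemma chi_of_mem {n : ℕ} {K : Set (EuclideanSpace ℝ (Fin n))}
    {x : EuclideanSpace ℝ (Fin n)} (hx : x ∈ K) : chi K x = 1 := by
  simp [chi, hx]

lemma aux_ineq (r r' ε m : ℝ) (hr : 0 ≤ r) (hr' : 0 ≤ r') (hε : 0 ≤ ε)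
    (hm : 0 ≤ m) (h1 : 1 ≤ r' ^ 2 + m) (h2 : r' ≤ r + ε) :
    1 - 2 * ε ≤ r ^ 2 + m := by
  rcases le_or_gt r' 1 with hc | hc
  · rcases le_or_gt ε r' with hc2 | hc2
    · nlinarith [sq_nonneg (r - (r' - ε)), mul_nonneg hε (sub_nonneg.2 hc)]
    · nlinarith [mul_nonneg hε hr', mul_le_mul hc2.le hc hr' hε]
  · rcases le_or_gt ε 1 with hc2 | hc2
    · nlinarith [sq_nonneg (r - (1 - ε)), sq_nonneg r]
    · nlinarith [sq_nonneg r]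

lemma complete_square {n : ℕ} (lam : ℝ) (hlam : 0 < lam)
    (ℓ : EuclideanSpace ℝ (Fin n) →ᵃ[ℝ] ℝ) :
    ∃ q : EuclideanSpace ℝ (Fin n), ∀ y,
      lam * ‖y‖ ^ 2 - ℓ y =
        lam * ‖y - q‖ ^ 2 + (lam * ‖q‖ ^ 2 - ℓ q) := by
  set L : EuclideanSpace ℝ (Fin n) →L[ℝ] ℝ := LinearMap.toContinuousLinearMap ℓ.linear
  set b : EuclideanSpace ℝ (Fin n) := (InnerProductSpace.toDual ℝ _).symm L
  refine ⟨(2 * lam)⁻¹ • b, fun y => ?_⟩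
  have hb : ∀ z : EuclideanSpace ℝ (Fin n), ℓ.linear z = ⟪b, z⟫ := by
    intro z
    have h : ⟪b, z⟫ = L z := InnerProductSpace.toDual_symm_apply
    simp [L] at h
    exact h.symm
  have hdec : ∀ z : EuclideanSpace ℝ (Fin n), ℓ z = ⟪b, z⟫ + ℓ 0 := by
    intro z
    have : ℓ z = ℓ.linear z + ℓ 0 := by
      simpa using ℓ.map_vadd 0 z
    rw [this, hb]
  set q : EuclideanSpace ℝ (Fin n) := (2 * lam)⁻¹ • b
  have hq : ∀ z : EuclideanSpace ℝ (Fin n), ⟪b, z⟫ = 2 * lam * ⟪q, z⟫ := by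
    intro z
    have h2 : (2 * lam) ≠ 0 := by positivity
    have h3 : ⟪q, z⟫ = (2 * lam)⁻¹ * ⟪b, z⟫ := real_inner_smul_left b z _
    rw [h3]
    field_simp
  have hns : ‖y - q‖ ^ 2 = ‖y‖ ^ 2 - 2 * ⟪y, q⟫ + ‖q‖ ^ 2 := by
    rw [norm_sub_sq_real]
  rw [hdec y, hdec q, hq y, hq q, hns, real_inner_self_eq_norm_sq,
    real_inner_comm q y]
  ring

lemma minor_mem_le {n : ℕ} (lam : ℝ) (hlam : 0 < lam)
    (K : Set (EuclideanSpace ℝ (Fin n))) (x : EuclideanSpace ℝ (Fin n)) :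
    BddAbove {a : ℝ | ∃ ℓ : EuclideanSpace ℝ (Fin n) →ᵃ[ℝ] ℝ,
      (∀ y, ℓ y ≤ lam * ‖y‖ ^ 2 - chi K y) ∧ a = ℓ x} := by
  refine ⟨lam * ‖x‖ ^ 2 - chi K x, ?_⟩
  rintro a ⟨ℓ, hℓ, rfl⟩
  exact hℓ x

lemma minor_nonempty {n : ℕ} (lam : ℝ) (hlam : 0 < lam)
    (K : Set (EuclideanSpace ℝ (Fin n))) (x : EuclideanSpace ℝ (Fin n)) :
    Set.Nonempty {a : ℝ | ∃ ℓ : EuclideanSpace ℝ (Fin n) →ᵃ[ℝ] ℝ,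
      (∀ y, ℓ y ≤ lam * ‖y‖ ^ 2 - chi K y) ∧ a = ℓ x} := by
  refine ⟨-1, AffineMap.const ℝ _ (-1), fun y => ?_, by simp⟩
  have h1 : chi K y ≤ 1 := chi_le_one K y
  have h2 : 0 ≤ lam * ‖y‖ ^ 2 := by positivity
  simp only [AffineMap.const_apply]
  linarith

/-- Key transfer estimate between envelopes. -/
lemma envelope_transfer {n : ℕ} (lam δ : ℝ) (hlam : 0 < lam) (hδ : 0 ≤ δ)
    (E F : Set (EuclideanSpace ℝ (Fin n)))
    (hsub : ∀ y ∈ E, ∃ y' ∈ F, dist y y' ≤ δ) (x : EuclideanSpace ℝ (Fin n)) :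
    convEnv (fun y => lam * ‖y‖ ^ 2 - chi F y) x ≤
      convEnv (fun y => lam * ‖y‖ ^ 2 - chi E y) x + 2 * Real.sqrt lam * δ := by
  have hsl : 0 < Real.sqrt lam := Real.sqrt_pos.2 hlam
  unfold convEnv
  apply csSup_le (minor_nonempty lam hlam F x)
  rintro a ⟨ℓ, hℓ, rfl⟩
  set c : ℝ := 2 * Real.sqrt lam * δ with hc
  have hc0 : 0 ≤ c := by positivity
  set ℓ' : EuclideanSpace ℝ (Fin n) →ᵃ[ℝ] ℝ := ℓ - AffineMap.const ℝ _ c with hℓ'def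
  have hℓ'app : ∀ y, ℓ' y = ℓ y - c := by
    intro y; simp [hℓ'def]
  obtain ⟨q, hq⟩ := complete_square lam hlam ℓ
  have hm : 0 ≤ lam * ‖q‖ ^ 2 - ℓ q := by
    have := hℓ q
    have := chi_nonneg F q
    linarith
  have hmin : ∀ y, ℓ' y ≤ lam * ‖y‖ ^ 2 - chi E y := by
    intro y
    rw [hℓ'app]
    by_cases hy : y ∈ E
    · obtain ⟨y', hy', hd⟩ := hsub y hy
      rw [chi_of_mem hy]
      -- need : 1 - c ≤ lam * ‖y‖^2 - ℓ y
      have h1 : 1 ≤ lam * ‖y' - q‖ ^ 2 + (lam * ‖q‖ ^ 2 - ℓ q) := by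
        have := hℓ y'
        rw [chi_of_mem hy'] at this
        have := hq y'
        linarith
      have h2 : ‖y' - q‖ ≤ ‖y - q‖ + δ := by
        have h3 : ‖y' - q‖ ≤ ‖y' - y‖ + ‖y - q‖ := norm_sub_le_norm_sub_add_norm_sub y' y q
        have h4 : ‖y' - y‖ = dist y y' := by rw [dist_comm]; exact (dist_eq_norm y' y).symm
        linarith
      have key := aux_ineq (Real.sqrt lam * ‖y - q‖) (Real.sqrt lam * ‖y' - q‖)
        (Real.sqrt lam * δ) (lam * ‖q‖ ^ 2 - ℓ q)
        (by positivity) (by positivity) (by positivity) hm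
        (by rw [mul_pow, Real.sq_sqrt hlam.le]; exact h1)
        (by nlinarith [hsl.le])
      rw [mul_pow, Real.sq_sqrt hlam.le] at key
      have := hq y
      have hcc : (2 : ℝ) * (Real.sqrt lam * δ) = c := by rw [hc]; ring
      linarith [key, hcc ▸ key]
    · have hchi : chi E y = 0 := by simp [chi, hy]
      rw [hchi]
      have := hℓ y
      have := chi_nonneg F y
      linarith
  have hmem : ℓ' x ∈ {a : ℝ | ∃ ℓ : EuclideanSpace ℝ (Fin n) →ᵃ[ℝ] ℝ,
      (∀ y, ℓ y ≤ lam * ‖y‖ ^ 2 - chi E y) ∧ a = ℓ x} := ⟨ℓ', hmin, rfl⟩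
  have hle : ℓ' x ≤ sSup {a : ℝ | ∃ ℓ : EuclideanSpace ℝ (Fin n) →ᵃ[ℝ] ℝ,
      (∀ y, ℓ y ≤ lam * ‖y‖ ^ 2 - chi E y) ∧ a = ℓ x} :=
    le_csSup (minor_mem_le lam hlam E x) hmem
  have := hℓ'app x
  linarith

/-- Hausdorff-Lipschitz continuity of the upper transform of characteristic
functions of compact sets. -/
theorem upperT_chi_hausdorff_lipschitz (n : ℕ) (hn : 1 ≤ n)
    (E F : Set (EuclideanSpace ℝ (Fin n))) (hE : E.Nonempty) (hF : F.Nonempty)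
    (hEc : IsCompact E) (hFc : IsCompact F)
    (lam : ℝ) (hlam : 0 < lam) (x : EuclideanSpace ℝ (Fin n)) :
    |upperT lam (chi E) x - upperT lam (chi F) x| ≤
      2 * Real.sqrt lam * Metric.hausdorffDist E F := by
  set δ : ℝ := Metric.hausdorffDist E F with hδdef
  have hδ0 : 0 ≤ δ := Metric.hausdorffDist_nonneg
  have hfin : EMetric.hausdorffEdist E F ≠ ⊤ :=
    Metric.hausdorffEdist_ne_top_of_nonempty_of_bounded hE hF hEc.isBounded hFc.isBounded
  have hsubEF : ∀ y ∈ E, ∃ y' ∈ F, dist y y' ≤ δ := by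
    intro y hy
    obtain ⟨y', hy', hdy⟩ := hFc.exists_infDist_eq_dist hF y
    exact ⟨y', hy', by
      rw [← hdy]
      exact Metric.infDist_le_hausdorffDist_of_mem hy hfin⟩
  have hsubFE : ∀ y ∈ F, ∃ y' ∈ E, dist y y' ≤ δ := by
    intro y hy
    obtain ⟨y', hy', hdy⟩ := hEc.exists_infDist_eq_dist hE y
    refine ⟨y', hy', ?_⟩
    rw [← hdy]
    have h := Metric.infDist_le_hausdorffDist_of_mem hy
      (by rw [EMetric.hausdorffEdist_comm]; exact hfin)
    rwa [Metric.hausdorffDist_comm] at h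
  have h1 := envelope_transfer lam δ hlam hδ0 E F hsubEF x
  have h2 := envelope_transfer lam δ hlam hδ0 F E hsubFE x
  have hiff : upperT lam (chi E) x - upperT lam (chi F) x =
      convEnv (fun y => lam * ‖y‖ ^ 2 - chi F y) x -
      convEnv (fun y => lam * ‖y‖ ^ 2 - chi E y) x := by
    unfold upperT; ring
  rw [hiff]
  rw [abs_le]
  constructor <;> linarith
end
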